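/- Let G be an l-group with left Haar measure dg and W a complex vector space. The linear map C_c^∞(G, W) → W, φ ↦ ∫_G φ(g) dg, descends to a linear isomorphism from the quotient of C_c^∞(G, W) by the linear span of {L_gψ − ψ : g ∈ G, ψ ∈ C_c^∞(G, W)} onto W, where (L_gψ)(x) = ψ(g^{-1}x); that is, the coinvariant space H₀(G, C_c^∞(G, W)) for the left regular action of G (acting trivially on W) is isomorphic to W via integration. -/

import Mathlib

open MeasureTheory
open scoped Pointwise

noncomputable section

/-- The space of locally constant, compactly supported `V`-valued functions on `X`,
as a `ℂ`-submodule of `X → V`.  This is `C_c^∞(X, V)`. -/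
def SmCc (X : Type*) [TopologicalSpace X] (V : Type*) [AddCommGroup V] [Module ℂ V] :
    Submodule ℂ (X → V) where
  carrier := {f | IsLocallyConstant f ∧ HasCompactSupport f}
  add_mem' := fun hf hg => ⟨hf.1.add hg.1, hf.2.add hg.2⟩
  zero_mem' := ⟨IsLocallyConstant.const 0, by
    have : Function.support (0 : X → V) = ∅ := Function.support_zero
    simp [HasCompactSupport, tsupport, this]⟩
  smul_mem' := fun c f hf => ⟨hf.1.comp (fun v => c • v), hf.2.mono
    (Function.support_const_smul_subset c f)⟩

/-- The integral of a locally constant compactly supported function against a measure: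
the finite sum `∑ᵥ μ(f⁻¹{v}) • v` over the (finitely many) nonzero values of `f`. -/
def smInt {X : Type*} [MeasurableSpace X] (μ : Measure X)
    {V : Type*} [AddCommGroup V] [Module ℂ V] (f : X → V) : V :=
  ∑ᶠ v : V, (((μ (f ⁻¹' {v})).toReal : ℝ) : ℂ) • v

/-- A representation of `G` on a complex vector space is *smooth* if every vector is fixed
by some open subgroup. -/
def SmoothRep {G : Type*} [Group G] [TopologicalSpace G] {V : Type*} [AddCommGroup V]
    [Module ℂ V] (ρ : Representation ℂ G V) : Prop :=
  ∀ v : V, ∃ U : Subgroup G, IsOpen (U : Set G) ∧ ∀ g ∈ U, ρ g v = v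

/-- `G` admits a neighbourhood basis of the identity consisting of compact open subgroups
(part of the definition of an `l`-group). -/
def HasCompactOpenBasis (G : Type*) [Group G] [TopologicalSpace G] : Prop :=
  ∀ U ∈ nhds (1 : G), ∃ K : Subgroup G, IsCompact (K : Set G) ∧ IsOpen (K : Set G) ∧
    (K : Set G) ⊆ U

/-- Pullback along a homeomorphism combined with postcomposition by a linear map, as a linear
map between spaces of locally constant compactly supported functions. -/
def ccMap {X Y : Type*} [TopologicalSpace X] [TopologicalSpace Y]
    {V W : Type*} [AddCommGroup V] [Module ℂ V] [AddCommGroup W] [Module ℂ W]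
    (φ : X ≃ₜ Y) (T : V →ₗ[ℂ] W) : SmCc Y V →ₗ[ℂ] SmCc X W where
  toFun f := ⟨fun x => T (f.1 (φ x)),
    ⟨(f.2.1.comp_continuous φ.continuous).comp T, (f.2.2.comp_homeomorph φ).comp_left T.map_zero⟩⟩
  map_add' f g := by ext x; simp
  map_smul' c f := by ext x; simp

/-- The span, inside `C_c^∞(G, W)`, of the elements `L_gψ − ψ` for the left regular action of
`G` (acting trivially on `W`). -/
def lRegCoinvSpan (G : Type*) [Group G] [TopologicalSpace G]
    (W : Type*) [AddCommGroup W] [Module ℂ W] : Submodule ℂ (SmCc G W) :=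
  Submodule.span ℂ
    {f : SmCc G W | ∃ (g : G) (ψ : SmCc G W),
      (f : G → W) = (fun x => (ψ : G → W) (g⁻¹ * x)) - (ψ : G → W)}


set_option linter.unusedSectionVars false
set_option linter.unusedVariables false
set_option maxHeartbeats 1000000

section AuxLemmas

variable {G : Type*} [Group G] [TopologicalSpace G] [IsTopologicalGroup G]
variable {W : Type*} [AddCommGroup W] [Module ℂ W]

lemma indicator_locConst {U : Set G} (hUo : IsOpen U) (hUc : IsClosed U) (v : W) :
    IsLocallyConstant (Set.indicator U (fun _ => v)) := by
  rw [IsLocallyConstant.iff_exists_open]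
  intro x
  by_cases hx : x ∈ U
  · exact ⟨U, hUo, hx, fun y hy => by simp [Set.indicator_of_mem, hx, hy]⟩
  · exact ⟨Uᶜ, hUc.isOpen_compl, hx, fun y hy =>
      by rw [Set.indicator_of_notMem hy, Set.indicator_of_notMem hx]⟩

lemma indicator_hcs {U : Set G} (hUcl : IsClosed U) (hUcomp : IsCompact U) (v : W) :
    HasCompactSupport (Set.indicator U (fun _ => v)) := by
  apply HasCompactSupport.intro hUcomp
  intro x hx
  exact Set.indicator_of_notMem hx _

lemma indicator_coset (K : Set G) (s x : G) (v : W) :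
    Set.indicator K (fun _ => v) (s⁻¹ * x) = Set.indicator (s • K) (fun _ => v) x := by
  by_cases h : s⁻¹ * x ∈ K
  · rw [Set.indicator_of_mem h, Set.indicator_of_mem (by rwa [mem_leftCoset_iff])]
  · rw [Set.indicator_of_notMem h, Set.indicator_of_notMem (by rwa [mem_leftCoset_iff])]

lemma exists_rightInvariant (hG : HasCompactOpenBasis G) (f : G → W)
    (hf : IsLocallyConstant f) (hsupp : HasCompactSupport f) :
    ∃ K : Subgroup G, IsCompact (K : Set G) ∧ IsOpen (K : Set G) ∧
      ∀ x : G, ∀ k ∈ K, f (x * k) = f x := by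
  -- for each x pick a compact open subgroup on whose coset f is constant
  have step : ∀ x : G, ∃ K : Subgroup G, IsCompact (K : Set G) ∧ IsOpen (K : Set G) ∧
      ∀ k ∈ K, f (x * k) = f x := by
    intro x
    obtain ⟨U, hUo, hxU, hU⟩ := hf.exists_open x
    have h1 : (fun k => x * k) ⁻¹' U ∈ nhds (1 : G) := by
      apply IsOpen.mem_nhds (hUo.preimage (by continuity))
      simpa using hxU
    obtain ⟨K, hKc, hKo, hKU⟩ := hG _ h1
    exact ⟨K, hKc, hKo, fun k hk => hU _ (hKU hk)⟩
  choose Kf hKfc hKfo hKf using step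
  -- a base compact open subgroup
  obtain ⟨K₀, hK₀c, hK₀o, -⟩ := hG Set.univ Filter.univ_mem
  -- finite subcover of the support
  obtain ⟨T, hT⟩ := hsupp.elim_finite_subcover (fun x : G => x • (Kf x : Set G))
    (fun x => (hKfo x).smul x)
    (fun x hx => Set.mem_iUnion.2 ⟨x, ⟨1, (Kf x).one_mem, by simp⟩⟩)
  refine ⟨K₀ ⊓ ⨅ t : T, Kf t, ?_, ?_, ?_⟩
  · rw [Subgroup.coe_inf]
    refine hK₀c.inter_right ?_
    rw [Subgroup.coe_iInf]
    exact isClosed_iInter fun t => Subgroup.isClosed_of_isOpen _ (hKfo t)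
  · rw [Subgroup.coe_inf, Subgroup.coe_iInf]
    exact hK₀o.inter (isOpen_iInter_of_finite fun t => hKfo t)
  · intro x k hk
    set K : Subgroup G := K₀ ⊓ ⨅ t : T, Kf t with hKdef
    have hkK : ∀ t : T, k ∈ Kf t := fun t =>
      Subgroup.mem_iInf.mp (Subgroup.mem_inf.mp hk).2 t
    by_cases hmeet : ∃ y, y ∈ x • (K : Set G) ∧ y ∈ tsupport f
    · obtain ⟨y, hyx, hyC⟩ := hmeet
      obtain ⟨t, htT, hyt⟩ : ∃ t ∈ T, y ∈ t • (Kf t : Set G) := by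
        have := hT hyC
        simpa using this
      have hj : t⁻¹ * y ∈ Kf t := (mem_leftCoset_iff t).mp hyt
      have hk₁ : x⁻¹ * y ∈ K := (mem_leftCoset_iff x).mp hyx
      have hk₁t : x⁻¹ * y ∈ Kf t := Subgroup.mem_iInf.mp (Subgroup.mem_inf.mp hk₁).2 ⟨t, htT⟩
      have e1 : f (x * k) = f t := by
        have hx' : x * k = t * ((t⁻¹ * y) * (x⁻¹ * y)⁻¹ * k) := by group
        rw [hx']
        exact hKf t _ (mul_mem (mul_mem hj (inv_mem hk₁t)) (hkK ⟨t, htT⟩))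
      have e2 : f x = f t := by
        have hx' : x = t * ((t⁻¹ * y) * (x⁻¹ * y)⁻¹) := by group
        rw [hx']
        exact hKf t _ (mul_mem hj (inv_mem hk₁t))
      rw [e1, e2]
    · push_neg at hmeet
      have h1 : f x = 0 := by
        apply image_eq_zero_of_notMem_tsupport
        intro hx
        exact hmeet x ⟨1, K.one_mem, by simp⟩ hx
      have h2 : f (x * k) = 0 := by
        apply image_eq_zero_of_notMem_tsupport
        intro hx
        exact hmeet (x * k) ⟨k, hk, rfl⟩ hx
      rw [h1, h2]

/-- Cover a compact set by disjoint left cosets of an open subgroup. -/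
lemma exists_coset_cover (K : Subgroup G) (hKo : IsOpen (K : Set G))
    {C : Set G} (hC : IsCompact C) :
    ∃ S : Finset G,
      (∀ s ∈ S, ∀ t ∈ S, s ≠ t → Disjoint (s • (K : Set G)) (t • (K : Set G))) ∧
      C ⊆ ⋃ s ∈ S, s • (K : Set G) := by
  classical
  obtain ⟨T, hT⟩ := hC.elim_finite_subcover (fun x : G => x • (K : Set G))
    (fun x => hKo.smul x)
    (fun x hx => Set.mem_iUnion.2 ⟨x, ⟨1, K.one_mem, by simp⟩⟩)
  refine ⟨T.image (fun t => (QuotientGroup.mk (s := K) t).out), ?_, ?_⟩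
  · intro s hs t ht hst
    simp only [Finset.mem_image] at hs ht
    obtain ⟨s₁, hs₁, rfl⟩ := hs
    obtain ⟨t₁, ht₁, rfl⟩ := ht
    rw [Set.disjoint_left]
    rintro y hys hyt
    apply hst
    have h1 : QuotientGroup.mk (s := K) (QuotientGroup.mk (s := K) s₁).out = QuotientGroup.mk s₁ :=
      Quotient.out_eq _
    have h2 : QuotientGroup.mk (s := K) (QuotientGroup.mk (s := K) t₁).out = QuotientGroup.mk t₁ :=
      Quotient.out_eq _
    have hys' := (mem_leftCoset_iff _).mp hys
    have hyt' := (mem_leftCoset_iff _).mp hyt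
    have e1 : QuotientGroup.mk (s := K) (QuotientGroup.mk (s := K) s₁).out = QuotientGroup.mk y :=
      (QuotientGroup.eq ).mpr hys'
    have e2 : QuotientGroup.mk (s := K) (QuotientGroup.mk (s := K) t₁).out = QuotientGroup.mk y :=
      (QuotientGroup.eq ).mpr hyt'
    have : QuotientGroup.mk (s := K) s₁ = QuotientGroup.mk t₁ := by rw [← h1, ← h2, e1, e2]
    rw [this]
  · intro x hx
    obtain ⟨t, htT, hxt⟩ : ∃ t ∈ T, x ∈ t • (K : Set G) := by simpa using hT hx
    refine Set.mem_biUnion (Finset.mem_image_of_mem _ htT) ?_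
    rw [mem_leftCoset_iff]
    have h2 : QuotientGroup.mk (s := K) (QuotientGroup.mk (s := K) t).out = QuotientGroup.mk t :=
      Quotient.out_eq _
    have : QuotientGroup.mk (s := K) t = QuotientGroup.mk x :=
      (QuotientGroup.eq).mpr ((mem_leftCoset_iff _).mp hxt)
    exact QuotientGroup.eq.mp (h2.trans this)

/-- Representation of an invariant function as a sum of indicators. -/
lemma repr_eq (K : Subgroup G) {f : G → W}
    (hinv : ∀ x : G, ∀ k ∈ K, f (x * k) = f x)
    {S : Finset G}
    (hdisj : ∀ s ∈ S, ∀ t ∈ S, s ≠ t → Disjoint (s • (K : Set G)) (t • (K : Set G)))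
    (hcov : tsupport f ⊆ ⋃ s ∈ S, s • (K : Set G)) (x : G) :
    f x = ∑ s ∈ S, Set.indicator (s • (K : Set G)) (fun _ => f s) x := by
  by_cases hx : ∃ s ∈ S, x ∈ s • (K : Set G)
  · obtain ⟨s₀, hs₀, hxs₀⟩ := hx
    rw [Finset.sum_eq_single_of_mem s₀ hs₀]
    · rw [Set.indicator_of_mem hxs₀]
      have : x = s₀ * (s₀⁻¹ * x) := by group
      rw [this, hinv s₀ _ ((mem_leftCoset_iff _).mp hxs₀)]
    · intro t htS hts
      apply Set.indicator_of_notMem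
      exact fun hxt => (Set.disjoint_left.mp (hdisj t htS s₀ hs₀ hts)) hxt hxs₀
  · push_neg at hx
    have h0 : f x = 0 := by
      apply image_eq_zero_of_notMem_tsupport
      intro hmem
      obtain ⟨s, hs, hxs⟩ : ∃ s ∈ S, x ∈ s • (K : Set G) := by simpa using hcov hmem
      exact hx s hs hxs
    rw [h0]
    exact (Finset.sum_eq_zero fun s hs => Set.indicator_of_notMem (hx s hs) _).symm

section Meas

variable [MeasurableSpace G] [BorelSpace G]

lemma measure_smul_coset (μ : Measure G) [μ.IsMulLeftInvariant] (s : G) (K : Set G) :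
    μ (s • K) = μ K := by
  have h : s • K = (fun h => s⁻¹ * h) ⁻¹' K := by
    ext x
    simp [Set.mem_smul_set_iff_inv_smul_mem]
  rw [h, measure_preimage_mul]

lemma smInt_indicator_sum (μ : Measure G) [μ.IsMulLeftInvariant] [IsFiniteMeasureOnCompacts μ]
    (K : Subgroup G) (hKo : IsOpen (K : Set G)) (hKc : IsCompact (K : Set G))
    {S : Finset G}
    (hdisj : ∀ s ∈ S, ∀ t ∈ S, s ≠ t → Disjoint (s • (K : Set G)) (t • (K : Set G)))
    (w : G → W) :
    smInt μ (fun x => ∑ s ∈ S, Set.indicator (s • (K : Set G)) (fun _ => w s) x)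
      = ∑ s ∈ S, (((μ (K : Set G)).toReal : ℝ) : ℂ) • w s := by
  classical
  set F : G → W := fun x => ∑ s ∈ S, Set.indicator (s • (K : Set G)) (fun _ => w s) x with hF
  have hFmem : ∀ s₀ ∈ S, ∀ x ∈ s₀ • (K : Set G), F x = w s₀ := by
    intro s₀ hs₀ x hx
    simp only [hF]
    rw [Finset.sum_eq_single_of_mem s₀ hs₀]
    · exact Set.indicator_of_mem hx _
    · intro t htS hts
      exact Set.indicator_of_notMem
        (fun hxt => (Set.disjoint_left.mp (hdisj t htS s₀ hs₀ hts)) hxt hx) _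
  have hFnot : ∀ x, (∀ s ∈ S, x ∉ s • (K : Set G)) → F x = 0 := by
    intro x hx
    exact Finset.sum_eq_zero fun s hs => Set.indicator_of_notMem (hx s hs) _
  -- preimage description
  have hpre : ∀ v : W, v ≠ 0 →
      F ⁻¹' {v} = ⋃ s ∈ S.filter (fun s => w s = v), s • (K : Set G) := by
    intro v hv
    ext x
    simp only [Set.mem_preimage, Set.mem_singleton_iff, Set.mem_iUnion, Finset.mem_filter,
      exists_prop]
    constructor
    · intro hx
      by_cases hc : ∃ s ∈ S, x ∈ s • (K : Set G)
      · obtain ⟨s₀, hs₀, hxs₀⟩ := hc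
        exact ⟨s₀, ⟨hs₀, (hFmem s₀ hs₀ x hxs₀).symm.trans hx⟩, hxs₀⟩
      · push_neg at hc
        exact absurd (hFnot x hc ▸ hx) (by simpa using fun h => hv h.symm)
    · rintro ⟨s, ⟨hsS, hsv⟩, hxs⟩
      rw [hFmem s hsS x hxs, hsv]
  -- measure of preimage
  have hmeas : ∀ v : W, v ≠ 0 →
      μ (F ⁻¹' {v}) = (S.filter (fun s => w s = v)).card • μ (K : Set G) := by
    intro v hv
    rw [hpre v hv, measure_biUnion_finset]
    · rw [Finset.sum_congr rfl (fun s _ => measure_smul_coset μ s K), Finset.sum_const]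
    · intro s hs t ht hst
      exact hdisj s (Finset.mem_of_mem_filter s hs) t (Finset.mem_of_mem_filter t ht) hst
    · exact fun s _ => (hKo.smul s).measurableSet
  -- support of the summand
  have hsupp : (Function.support fun v : W => (((μ (F ⁻¹' {v})).toReal : ℝ) : ℂ) • v)
      ⊆ ↑(S.image w) := by
    intro v hv
    have hv0 : v ≠ 0 := by
      intro h
      apply hv
      simp [h]
    have hμ : μ (F ⁻¹' {v}) ≠ 0 := by
      intro h
      apply hv
      simp [h]
    have hne : (F ⁻¹' {v}).Nonempty := by
      rw [Set.nonempty_iff_ne_empty]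
      intro h
      exact hμ (by simp [h])
    obtain ⟨x, hx⟩ := hne
    have hx' : F x = v := hx
    by_cases hc : ∃ s ∈ S, x ∈ s • (K : Set G)
    · obtain ⟨s₀, hs₀, hxs₀⟩ := hc
      have : w s₀ = v := (hFmem s₀ hs₀ x hxs₀).symm.trans hx'
      simpa using ⟨s₀, hs₀, this⟩
    · push_neg at hc
      exact absurd (hx' ▸ (hFnot x hc).symm) (fun h => hv0 h.symm)
  rw [smInt, finsum_eq_sum_of_support_subset _ hsupp]
  rw [← Finset.sum_fiberwise_of_maps_to (g := w) (fun s hs => Finset.mem_image_of_mem w hs)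
    (fun s => (((μ (K : Set G)).toReal : ℝ) : ℂ) • w s)]
  refine Finset.sum_congr rfl fun v hv => ?_
  have hinner : ∑ s ∈ S.filter (fun s => w s = v), (((μ (K : Set G)).toReal : ℝ) : ℂ) • w s
      = (S.filter (fun s => w s = v)).card • ((((μ (K : Set G)).toReal : ℝ) : ℂ) • v) := by
    rw [← Finset.sum_const]
    refine Finset.sum_congr rfl fun s hs => ?_
    rw [(Finset.mem_filter.mp hs).2]
  rw [hinner]
  by_cases hv0 : v = 0
  · simp [hv0]
  · rw [hmeas v hv0]
    have hK : μ (K : Set G) ≠ ⊤ := hKc.measure_lt_top.ne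
    rw [ENNReal.toReal_nsmul]
    rw [nsmul_eq_mul]
    push_cast
    rw [← Nat.cast_smul_eq_nsmul ℂ, smul_smul]

lemma smInt_eq (μ : Measure G) [μ.IsMulLeftInvariant] [IsFiniteMeasureOnCompacts μ]
    (K : Subgroup G) (hKo : IsOpen (K : Set G)) (hKc : IsCompact (K : Set G))
    {f : G → W} (hinv : ∀ x : G, ∀ k ∈ K, f (x * k) = f x)
    {S : Finset G}
    (hdisj : ∀ s ∈ S, ∀ t ∈ S, s ≠ t → Disjoint (s • (K : Set G)) (t • (K : Set G)))
    (hcov : tsupport f ⊆ ⋃ s ∈ S, s • (K : Set G)) :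
    smInt μ f = ∑ s ∈ S, (((μ (K : Set G)).toReal : ℝ) : ℂ) • f s := by
  have hfF : f = fun x => ∑ s ∈ S, Set.indicator (s • (K : Set G)) (fun _ => f s) x :=
    funext (repr_eq K hinv hdisj hcov)
  conv_lhs => rw [hfF]
  exact smInt_indicator_sum μ K hKo hKc hdisj f

lemma smInt_translate (μ : Measure G) [μ.IsMulLeftInvariant] (g : G) (ψ : G → W) :
    smInt μ (fun x => ψ (g⁻¹ * x)) = smInt μ ψ := by
  refine finsum_congr fun v => ?_
  have h : (fun x => ψ (g⁻¹ * x)) ⁻¹' {v} = (fun x => g⁻¹ * x) ⁻¹' (ψ ⁻¹' {v}) := rfl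
  rw [h, measure_preimage_mul]

end Meas

end AuxLemmas


/-- Integration against a left Haar measure descends to a linear isomorphism
`H₀(G, C_c^∞(G, W)) ≅ W` for the left regular action of `G` on `C_c^∞(G, W)`. -/
theorem coinvariants_of_regular_iso_integral
    (G : Type*) [Group G] [TopologicalSpace G] [IsTopologicalGroup G] [T2Space G]
    [LocallyCompactSpace G] [TotallyDisconnectedSpace G] [SigmaCompactSpace G]
    (hG : HasCompactOpenBasis G)
    [MeasurableSpace G] [BorelSpace G] (μ : Measure G) [μ.IsHaarMeasure]
    (W : Type*) [AddCommGroup W] [Module ℂ W] :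
    ∃ e : (SmCc G W ⧸ lRegCoinvSpan G W) ≃ₗ[ℂ] W,
      ∀ φ : SmCc G W, e (Submodule.Quotient.mk φ) = smInt μ (φ : G → W) := by
  classical
  have hKcl : ∀ K : Subgroup G, IsOpen (K : Set G) → IsClosed (K : Set G) :=
    fun K h => Subgroup.isClosed_of_isOpen K h
  -- common invariance subgroup for a pair of functions
  have common : ∀ f g : SmCc G W, ∃ K : Subgroup G, IsCompact (K : Set G) ∧
      IsOpen (K : Set G) ∧ (∀ x : G, ∀ k ∈ K, (f : G → W) (x * k) = (f : G → W) x) ∧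
      (∀ x : G, ∀ k ∈ K, (g : G → W) (x * k) = (g : G → W) x) := by
    intro f g
    obtain ⟨Kf, hc1, ho1, h1⟩ := exists_rightInvariant hG (f : G → W) f.2.1 f.2.2
    obtain ⟨Kg, hc2, ho2, h2⟩ := exists_rightInvariant hG (g : G → W) g.2.1 g.2.2
    refine ⟨Kf ⊓ Kg, ?_, ?_, fun x k hk => h1 x k (Subgroup.mem_inf.mp hk).1,
      fun x k hk => h2 x k (Subgroup.mem_inf.mp hk).2⟩
    · rw [Subgroup.coe_inf]
      exact hc1.inter_right (hKcl Kg ho2)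
    · rw [Subgroup.coe_inf]
      exact ho1.inter ho2
  -- additivity of integration on SmCc
  have hadd : ∀ f g : SmCc G W,
      smInt μ ((f + g : SmCc G W) : G → W) = smInt μ (f : G → W) + smInt μ (g : G → W) := by
    intro f g
    obtain ⟨K, hKc, hKo, h1, h2⟩ := common f g
    obtain ⟨S, hdisj, hcov⟩ := exists_coset_cover K hKo (f.2.2.union g.2.2)
    have hcovf : tsupport (f : G → W) ⊆ ⋃ s ∈ S, s • (K : Set G) :=
      (Set.subset_union_left).trans hcov
    have hcovg : tsupport (g : G → W) ⊆ ⋃ s ∈ S, s • (K : Set G) :=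
      (Set.subset_union_right).trans hcov
    have hcoe : ((f + g : SmCc G W) : G → W) = (f : G → W) + (g : G → W) := rfl
    have hcovfg : tsupport ((f + g : SmCc G W) : G → W) ⊆ ⋃ s ∈ S, s • (K : Set G) := by
      rw [hcoe]
      refine (closure_minimal ((Function.support_add _ _).trans
        (Set.union_subset_union (subset_tsupport _) (subset_tsupport _)))
        ((isClosed_tsupport _).union (isClosed_tsupport _))).trans hcov
    have hinvfg : ∀ x : G, ∀ k ∈ K,
        ((f + g : SmCc G W) : G → W) (x * k) = ((f + g : SmCc G W) : G → W) x := by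
      intro x k hk
      rw [hcoe]
      simp only [Pi.add_apply, h1 x k hk, h2 x k hk]
    rw [smInt_eq μ K hKo hKc hinvfg hdisj hcovfg, smInt_eq μ K hKo hKc h1 hdisj hcovf,
      smInt_eq μ K hKo hKc h2 hdisj hcovg, ← Finset.sum_add_distrib]
    refine Finset.sum_congr rfl fun s _ => ?_
    rw [hcoe]
    simp [smul_add]
  have hsmul : ∀ (c : ℂ) (f : SmCc G W),
      smInt μ ((c • f : SmCc G W) : G → W) = c • smInt μ (f : G → W) := by
    intro c f
    obtain ⟨K, hKc, hKo, h1, -⟩ := common f f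
    obtain ⟨S, hdisj, hcov⟩ := exists_coset_cover K hKo f.2.2
    have hcoe : ((c • f : SmCc G W) : G → W) = c • (f : G → W) := rfl
    have hcovc : tsupport ((c • f : SmCc G W) : G → W) ⊆ ⋃ s ∈ S, s • (K : Set G) := by
      rw [hcoe]
      refine (closure_minimal ((Function.support_const_smul_subset c _).trans
        (subset_tsupport _)) (isClosed_tsupport _)).trans hcov
    have hinvc : ∀ x : G, ∀ k ∈ K,
        ((c • f : SmCc G W) : G → W) (x * k) = ((c • f : SmCc G W) : G → W) x := by
      intro x k hk
      rw [hcoe]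
      simp only [Pi.smul_apply, h1 x k hk]
    rw [smInt_eq μ K hKo hKc hinvc hdisj hcovc, smInt_eq μ K hKo hKc h1 hdisj hcov,
      Finset.smul_sum]
    refine Finset.sum_congr rfl fun s _ => ?_
    simp only [hcoe, Pi.smul_apply]
    exact smul_comm _ _ _
  -- the integration linear map
  let I : SmCc G W →ₗ[ℂ] W :=
    { toFun := fun f => smInt μ (f : G → W)
      map_add' := hadd
      map_smul' := hsmul }
  have hIdef : ∀ f : SmCc G W, I f = smInt μ (f : G → W) := fun _ => rfl
  -- left translation operator
  let L : G → (SmCc G W →ₗ[ℂ] SmCc G W) :=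
    fun g => ccMap (Homeomorph.mulLeft g⁻¹) (LinearMap.id)
  have hLcoe : ∀ (g : G) (ψ : SmCc G W), ((L g ψ : SmCc G W) : G → W)
      = fun x => (ψ : G → W) (g⁻¹ * x) := fun _ _ => rfl
  -- the span is contained in the kernel
  have hspan : lRegCoinvSpan G W ≤ LinearMap.ker I := by
    rw [lRegCoinvSpan, Submodule.span_le]
    rintro f ⟨g, ψ, hf⟩
    have hfe : f = L g ψ - ψ := by
      apply Subtype.ext
      rw [hf]
      rfl
    simp only [SetLike.mem_coe, LinearMap.mem_ker]
    rw [hfe, map_sub]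
    have hLint : I (L g ψ) = I ψ := by
      rw [hIdef, hIdef, hLcoe]
      exact smInt_translate μ g (ψ : G → W)
    rw [hLint, sub_self]
  -- a fixed compact open subgroup and positivity of its measure
  obtain ⟨K₀, hK₀c, hK₀o, -⟩ := hG Set.univ Filter.univ_mem
  have hμpos : ∀ (K : Subgroup G), IsOpen (K : Set G) → IsCompact (K : Set G) →
      (((μ (K : Set G)).toReal : ℝ) : ℂ) ≠ 0 := by
    intro K hKo hKc
    have h1 : μ (K : Set G) ≠ 0 := (hKo.measure_pos μ ⟨1, K.one_mem⟩).ne'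
    have h2 : μ (K : Set G) ≠ ⊤ := hKc.measure_lt_top.ne
    simp [ENNReal.toReal_eq_zero_iff, h1, h2]
  -- indicator elements of SmCc
  have hindmem : ∀ (K : Subgroup G), IsOpen (K : Set G) → IsCompact (K : Set G) → ∀ v : W,
      Set.indicator (K : Set G) (fun _ => v) ∈ SmCc G W :=
    fun K hKo hKc v => ⟨indicator_locConst hKo (hKcl K hKo) v,
      indicator_hcs (hKcl K hKo) hKc v⟩
  -- the kernel is contained in the span
  have hker : LinearMap.ker I ≤ lRegCoinvSpan G W := by
    intro f hf
    rw [LinearMap.mem_ker, hIdef] at hf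
    obtain ⟨K, hKc, hKo, hinv⟩ := exists_rightInvariant hG (f : G → W) f.2.1 f.2.2
    obtain ⟨S, hdisj, hcov⟩ := exists_coset_cover K hKo f.2.2
    set c : ℂ := (((μ (K : Set G)).toReal : ℝ) : ℂ) with hc
    have hc0 : c ≠ 0 := hμpos K hKo hKc
    have hsum0 : ∑ s ∈ S, (f : G → W) s = 0 := by
      have h1 : smInt μ (f : G → W) = c • ∑ s ∈ S, (f : G → W) s := by
        rw [smInt_eq μ K hKo hKc hinv hdisj hcov, Finset.smul_sum]
      rw [hf] at h1
      rcases smul_eq_zero.mp h1.symm with h | h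
      · exact absurd h hc0
      · exact h
    -- the indicator functions
    set ψ : G → SmCc G W := fun s =>
      ⟨Set.indicator (K : Set G) (fun _ => (f : G → W) s), hindmem K hKo hKc _⟩ with hψ
    have hfeq : f = ∑ s ∈ S, (L s (ψ s) - ψ s) := by
      apply Subtype.ext
      have hcoesum : ((∑ s ∈ S, (L s (ψ s) - ψ s) : SmCc G W) : G → W)
          = ∑ s ∈ S, ((L s (ψ s) - ψ s : SmCc G W) : G → W) :=
        AddSubmonoidClass.coe_finset_sum _ _
      rw [hcoesum]
      funext x
      rw [Finset.sum_apply]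
      have hterm : ∀ s ∈ S, ((L s (ψ s) - ψ s : SmCc G W) : G → W) x
          = Set.indicator (s • (K : Set G)) (fun _ => (f : G → W) s) x
            - Set.indicator (K : Set G) (fun _ => (f : G → W) s) x := by
        intro s _
        have h1 : ((L s (ψ s) - ψ s : SmCc G W) : G → W) x
            = ((ψ s : SmCc G W) : G → W) (s⁻¹ * x) - ((ψ s : SmCc G W) : G → W) x := rfl
        rw [h1, hψ]
        simp only []
        rw [indicator_coset]
      rw [Finset.sum_congr rfl hterm, Finset.sum_sub_distrib]
      have h2 : ∑ s ∈ S, Set.indicator (K : Set G) (fun _ => (f : G → W) s) x = 0 := by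
        by_cases hx : x ∈ (K : Set G)
        · rw [Finset.sum_congr rfl fun s _ => Set.indicator_of_mem hx _]
          exact hsum0
        · exact Finset.sum_eq_zero fun s _ => Set.indicator_of_notMem hx _
      rw [h2, sub_zero]
      exact repr_eq K hinv hdisj hcov x
    rw [hfeq]
    refine Submodule.sum_mem _ fun s _ => Submodule.subset_span ?_
    exact ⟨s, ψ s, rfl⟩
  -- surjectivity
  have hsurj : Function.Surjective I := by
    intro w
    set c : ℂ := (((μ (K₀ : Set G)).toReal : ℝ) : ℂ) with hc
    have hc0 : c ≠ 0 := hμpos K₀ hK₀o hK₀c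
    set ψ : SmCc G W := ⟨Set.indicator (K₀ : Set G) (fun _ => w), hindmem K₀ hK₀o hK₀c w⟩
      with hψ
    have hIψ : I ψ = c • w := by
      rw [hIdef]
      have hfun : ((ψ : SmCc G W) : G → W)
          = fun x => ∑ s ∈ ({1} : Finset G),
              Set.indicator (s • (K₀ : Set G)) (fun _ => w) x := by
        funext x
        rw [Finset.sum_singleton, one_smul]
      rw [hfun, smInt_indicator_sum μ K₀ hK₀o hK₀c
        (by intro s hs t ht hst; simp only [Finset.mem_singleton] at hs ht;
            exact absurd (hs.trans ht.symm) hst) (fun _ => w), Finset.sum_singleton]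
    refine ⟨c⁻¹ • ψ, ?_⟩
    rw [_root_.map_smul, hIψ, smul_smul, inv_mul_cancel₀ hc0, one_smul]
  -- assemble the isomorphism
  have hbij : Function.Bijective ((lRegCoinvSpan G W).liftQ I hspan) := by
    constructor
    · rw [← LinearMap.ker_eq_bot]
      exact Submodule.ker_liftQ_eq_bot _ _ _ hker
    · intro w
      obtain ⟨f, hfw⟩ := hsurj w
      exact ⟨Submodule.Quotient.mk f, by rwa [Submodule.liftQ_apply]⟩
  refine ⟨LinearEquiv.ofBijective _ hbij, fun φ => ?_⟩
  rw [LinearEquiv.ofBijective_apply, Submodule.liftQ_apply]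
  exact hIdef φ
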